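/- arXiv:2008.08406 — 2 statements merged into one kernel-verified Lean document; each statement's English description precedes it below -/
import Mathlib

section
/- Let μ₀ < 0 and λ > 0. For s in a neighborhood of 0 in ℝ define ω₁(s) := √((λ+s)|μ₀|) and ω₂(s) := √((λ+s)|μ₀| + 1). Then the determinant of the 2×2 matrix whose first column is (ω₁'(0), ω₂'(0))^T and whose second column is (ω₁(0), ω₂(0))^T equals |μ₀| / (2√(λ|μ₀|(λ|μ₀|+1))); in particular it is nonzero, so the matrix [ω'(0) ω(0)] has rank 2. -/
noncomputable section

/-- the nondegeneracy determinant computation. -/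
theorem determinant_frequency_matrix (μ₀ lam : ℝ) (hμ₀ : μ₀ < 0) (hlam : 0 < lam) :
    let ω₁ : ℝ → ℝ := fun s => Real.sqrt ((lam + s) * |μ₀|)
    let ω₂ : ℝ → ℝ := fun s => Real.sqrt ((lam + s) * |μ₀| + 1)
    Matrix.det !![deriv ω₁ 0, ω₁ 0; deriv ω₂ 0, ω₂ 0]
        = |μ₀| / (2 * Real.sqrt (lam * |μ₀| * (lam * |μ₀| + 1))) ∧
      Matrix.det !![deriv ω₁ 0, ω₁ 0; deriv ω₂ 0, ω₂ 0] ≠ 0 ∧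
      (!![deriv ω₁ 0, ω₁ 0; deriv ω₂ 0, ω₂ 0] : Matrix (Fin 2) (Fin 2) ℝ).rank = 2 := by
  intro ω₁ ω₂
  have hm : 0 < |μ₀| := abs_pos.mpr (ne_of_lt hμ₀)
  set m := |μ₀| with hmdef
  have ha : 0 < lam * m := mul_pos hlam hm
  have ha1 : 0 < lam * m + 1 := by linarith
  have hg : HasDerivAt (fun s : ℝ => (lam + s) * m) m 0 := by
    simpa using ((hasDerivAt_id (0:ℝ)).const_add lam).mul_const m
  have hd1 : HasDerivAt ω₁ (m / (2 * Real.sqrt (lam * m))) 0 := by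
    have := hg.sqrt (by simpa using ha.ne')
    simpa using this
  have hd2 : HasDerivAt ω₂ (m / (2 * Real.sqrt (lam * m + 1))) 0 := by
    have hg2 : HasDerivAt (fun s : ℝ => (lam + s) * m + 1) m 0 := hg.add_const 1
    have := hg2.sqrt (by simpa using ha1.ne')
    simpa using this
  have hsa : 0 < Real.sqrt (lam * m) := Real.sqrt_pos.mpr ha
  have hsa1 : 0 < Real.sqrt (lam * m + 1) := Real.sqrt_pos.mpr ha1
  have hω₁0 : ω₁ 0 = Real.sqrt (lam * m) := by show Real.sqrt _ = _; congr 1; ring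
  have hω₂0 : ω₂ 0 = Real.sqrt (lam * m + 1) := by show Real.sqrt _ = _; congr 1; ring
  have hsq : Real.sqrt (lam * m) ^ 2 = lam * m := Real.sq_sqrt ha.le
  have hsq1 : Real.sqrt (lam * m + 1) ^ 2 = lam * m + 1 := Real.sq_sqrt ha1.le
  have hmulsqrt : Real.sqrt (lam * m * (lam * m + 1))
      = Real.sqrt (lam * m) * Real.sqrt (lam * m + 1) := Real.sqrt_mul ha.le _
  have hdet : Matrix.det !![deriv ω₁ 0, ω₁ 0; deriv ω₂ 0, ω₂ 0]
      = m / (2 * Real.sqrt (lam * m * (lam * m + 1))) := by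
    rw [Matrix.det_fin_two_of, hd1.deriv, hd2.deriv, hω₁0, hω₂0, hmulsqrt]
    have key : ∀ x y : ℝ, 0 < x → 0 < y → x ^ 2 = lam * m → y ^ 2 = lam * m + 1 →
        m / (2 * x) * y - x * (m / (2 * y)) = m / (2 * (x * y)) := by
      intro x y hx hy h1 h2
      field_simp
      linear_combination h2 - h1
    exact key _ _ hsa hsa1 hsq hsq1
  have hdetne : Matrix.det !![deriv ω₁ 0, ω₁ 0; deriv ω₂ 0, ω₂ 0] ≠ 0 := by
    rw [hdet]
    have : 0 < Real.sqrt (lam * m * (lam * m + 1)) := Real.sqrt_pos.mpr (mul_pos ha ha1)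
    positivity
  refine ⟨hdet, hdetne, ?_⟩
  have hu : IsUnit (!![deriv ω₁ 0, ω₁ 0; deriv ω₂ 0, ω₂ 0] : Matrix (Fin 2) (Fin 2) ℝ) :=
    (Matrix.isUnit_iff_isUnit_det _).mpr (isUnit_iff_ne_zero.mpr hdetne)
  rcases hu with ⟨u, hu⟩
  rw [← hu]
  simpa using Matrix.rank_unit u
end
end

section
/- Let N ≥ 2 and let b : ℝ^{N−1} → ℝ be bounded and continuous. Suppose μ₀ < 0 is a radial eigenvalue of −Δ − b on ℝ^{N−1} with eigenfunction ψ₀, and suppose no μ ≤ 0 with μ ≠ μ₀ is a radial eigenvalue of −Δ − b. Write points of ℝ^N as x = (x', x_N) with x' ∈ ℝ^{N−1}, and view b as a function of x independent of x_N. Then for μ ≤ 0 the following are equivalent: (i) there exists a nonzero w ∈ C²(ℝ^N), radially symmetric in x', even and 2π-periodic in x_N, with ∫_{ℝ^{N−1}×(−π,π)} w² < ∞, satisfying −Δw − b(x')w = μw pointwise on ℝ^N; (ii) μ = μ₀ + k² for some integer k ≥ 0 (with μ₀ + k² ≤ 0). Moreover, in case (ii) one may take w(x', x_N) = ψ₀(x')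 cos(k x_N). -/
open Real MeasureTheory

set_option synthInstance.maxHeartbeats 1000000
set_option maxHeartbeats 2000000

noncomputable section

/-- ℝᵏ with the Euclidean norm. -/
abbrev E (k : ℕ) := EuclideanSpace ℝ (Fin k)

/-- Sum of pure second partial derivatives: the Laplacian (for C² functions). -/
def lap {k : ℕ} (v : E k → ℝ) (p : E k) : ℝ :=
  ∑ i, fderiv ℝ (fun z => fderiv ℝ v z (EuclideanSpace.single i 1)) p
      (EuclideanSpace.single i 1)

/-- Second derivative of a function of one real variable. -/
def d2 (g : ℝ → ℝ) (t : ℝ) : ℝ := deriv (deriv g) t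

/-- v is a radial eigenfunction of −Δ − b on ℝ^{N−1} with eigenvalue μ. -/
def RadEigenfun {k : ℕ} (b : E k → ℝ) (μ : ℝ) (v : E k → ℝ) : Prop :=
  v ≠ 0 ∧ ContDiff ℝ 2 v ∧ (∀ x y : E k, ‖x‖ = ‖y‖ → v x = v y) ∧
    Integrable (fun x => (v x) ^ 2) ∧
    ∀ x, -lap v x - b x * v x = μ * v x

/-- μ is a radial eigenvalue of −Δ − b on ℝ^{N−1}. -/
def IsRadEigenvalue {k : ℕ} (b : E k → ℝ) (μ : ℝ) : Prop :=
  ∃ v, RadEigenfun b μ v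

/-- `w x' x_N` is a symmetric-periodic eigenfunction on ℝᴺ = ℝ^{N−1} × ℝ, for the
potential b = b(x') viewed as independent of x_N, with eigenvalue μ:  w is nonzero,
C², radially symmetric in x', even and 2π-periodic in x_N, square-integrable on
ℝ^{N−1} × (−π,π), and −Δw − b w = μ w pointwise (Δ in all N variables). -/
def SymPerEigenfun {k : ℕ} (b : E k → ℝ) (μ : ℝ) (w : E k → ℝ → ℝ) : Prop :=
  w ≠ 0 ∧ ContDiff ℝ 2 (fun p : E k × ℝ => w p.1 p.2) ∧
    (∀ x x' t, ‖x‖ = ‖x'‖ → w x t = w x' t) ∧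
    (∀ x t, w x (-t) = w x t) ∧ (∀ x t, w x (t + 2 * π) = w x t) ∧
    IntegrableOn (fun p : E k × ℝ => (w p.1 p.2) ^ 2) (Set.univ ×ˢ Set.Ioo (-π) π) ∧
    ∀ x t, -(lap (fun z => w z t) x + d2 (w x) t) - b x * w x t = μ * w x t

/-! ### Auxiliary lemmas -/

theorem measure_S_lt_top : volume (Set.Ioo (-π) π) < ⊤ := measure_Ioo_lt_top

theorem intOn_of_cont {Y : Type*} [NormedAddCommGroup Y] {g : ℝ → Y}
    (hg : Continuous g) : IntegrableOn g (Set.Ioo (-π) π) volume :=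
  (hg.integrableOn_Icc).mono_set Set.Ioo_subset_Icc_self

theorem pcont {M : ℕ} {Y : Type*} [NormedAddCommGroup Y] [NormedSpace ℝ Y]
    {G : E M → ℝ → Y} (hG : Continuous (fun p : E M × ℝ => G p.1 p.2)) :
    Continuous (fun x => ∫ t in Set.Ioo (-π) π, G x t) := by
  rw [continuous_iff_continuousAt]
  intro x₀
  obtain ⟨C, hC⟩ := ((isCompact_closedBall x₀ 1).prod isCompact_Icc).exists_bound_of_continuousOn
    (s := Metric.closedBall x₀ 1 ×ˢ Set.Icc (-π) π) hG.continuousOn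
  apply continuousAt_of_dominated (bound := fun _ => C)
  · exact Filter.Eventually.of_forall fun x =>
      (hG.comp (Continuous.prodMk_right x)).aestronglyMeasurable
  · filter_upwards [Metric.closedBall_mem_nhds x₀ one_pos] with x hx
    filter_upwards [ae_restrict_mem measurableSet_Ioo] with t ht
    exact hC (x, t) ⟨hx, Set.Ioo_subset_Icc_self ht⟩
  · exact (integrableOn_const measure_S_lt_top.ne)
  · exact Filter.Eventually.of_forall fun t =>
      (hG.comp (continuous_id.prodMk continuous_const)).continuousAt

theorem pderiv {M : ℕ} {Y : Type*} [NormedAddCommGroup Y] [NormedSpace ℝ Y] [CompleteSpace Y]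
    {G : E M → ℝ → Y} {G' : E M → ℝ → E M →L[ℝ] Y}
    (hG : Continuous (fun p : E M × ℝ => G p.1 p.2))
    (hG' : Continuous (fun p : E M × ℝ => G' p.1 p.2))
    (hd : ∀ x t, HasFDerivAt (fun z => G z t) (G' x t) x) (x₀ : E M) :
    HasFDerivAt (fun x => ∫ t in Set.Ioo (-π) π, G x t)
      (∫ t in Set.Ioo (-π) π, G' x₀ t) x₀ := by
  obtain ⟨C, hC⟩ := ((isCompact_closedBall x₀ 1).prod isCompact_Icc).exists_bound_of_continuousOn
    (s := Metric.closedBall x₀ 1 ×ˢ Set.Icc (-π) π) hG'.continuousOn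
  apply hasFDerivAt_integral_of_dominated_of_fderiv_le (s := Metric.ball x₀ 1) (Metric.ball_mem_nhds x₀ one_pos)
    (bound := fun _ => C)
  · exact Filter.Eventually.of_forall fun x =>
      (hG.comp (Continuous.prodMk_right x)).aestronglyMeasurable
  · exact intOn_of_cont (hG.comp (Continuous.prodMk_right x₀))
  · exact (hG'.comp (Continuous.prodMk_right x₀)).aestronglyMeasurable
  · filter_upwards [ae_restrict_mem measurableSet_Ioo] with t ht x hx
    exact hC (x, t) ⟨Metric.ball_subset_closedBall hx, Set.Ioo_subset_Icc_self ht⟩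
  · exact (integrableOn_const measure_S_lt_top.ne)
  · exact Filter.Eventually.of_forall fun t x _ => hd x t

theorem param_lap {M : ℕ} (F : E M → ℝ → ℝ)
    (hF : ContDiff ℝ 2 (fun p : E M × ℝ => F p.1 p.2)) :
    ContDiff ℝ 2 (fun x => ∫ t in Set.Ioo (-π) π, F x t) ∧
    ∀ x, lap (fun x => ∫ t in Set.Ioo (-π) π, F x t) x
        = ∫ t in Set.Ioo (-π) π, lap (fun z => F z t) x := by
  set uF : E M × ℝ → ℝ := fun p => F p.1 p.2 with huF
  set A := fderiv ℝ uF with hA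
  have hFc : Continuous uF := hF.continuous
  have hA1 : ContDiff ℝ 1 A := hF.fderiv_right (by norm_num)
  have hAc : Continuous A := hA1.continuous
  set A' := fderiv ℝ A with hA'
  have hA'c : Continuous A' := hA1.continuous_fderiv one_ne_zero
  set L : (E M × ℝ →L[ℝ] ℝ) →L[ℝ] (E M →L[ℝ] ℝ) :=
    (ContinuousLinearMap.compL ℝ (E M) (E M × ℝ) ℝ).flip
      (ContinuousLinearMap.inl ℝ (E M) ℝ) with hL
  set D1 : E M → ℝ → E M →L[ℝ] ℝ := fun x t => L (A (x, t)) with hD1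
  set D2 : E M → ℝ → E M →L[ℝ] E M →L[ℝ] ℝ := fun x t =>
    L.comp ((A' (x, t)).comp (ContinuousLinearMap.inl ℝ (E M) ℝ)) with hD2
  have hd1 : ∀ x t, HasFDerivAt (fun z => F z t) (D1 x t) x := by
    intro x t
    have h0 : HasFDerivAt uF (A (x, t)) (x, t) :=
      (hF.differentiable (by norm_num) (x, t)).hasFDerivAt
    have := h0.comp x (hasFDerivAt_prodMk_left (𝕜 := ℝ) x t)
    exact this
  have hD1c : Continuous (fun p : E M × ℝ => D1 p.1 p.2) := L.continuous.comp hAc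
  have hd2 : ∀ x t, HasFDerivAt (fun z => D1 z t) (D2 x t) x := by
    intro x t
    have h0 : HasFDerivAt A (A' (x, t)) (x, t) :=
      (hA1.differentiable one_ne_zero (x, t)).hasFDerivAt
    have := L.hasFDerivAt.comp x (h0.comp x (hasFDerivAt_prodMk_left x t))
    exact this
  have hD2c : Continuous (fun p : E M × ℝ => D2 p.1 p.2) := by
    exact continuous_const.clm_comp ((hA'c.clm_comp continuous_const))
  set v := fun x => ∫ t in Set.Ioo (-π) π, F x t with hv
  set v1 := fun x => ∫ t in Set.Ioo (-π) π, D1 x t with hv1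
  set v2 := fun x => ∫ t in Set.Ioo (-π) π, D2 x t with hv2
  have h1 : ∀ x, HasFDerivAt v (v1 x) x := fun x => pderiv hFc hD1c hd1 x
  have h2 : ∀ x, HasFDerivAt v1 (v2 x) x := fun x => pderiv hD1c hD2c hd2 x
  have hfv : fderiv ℝ v = v1 := funext fun x => (h1 x).fderiv
  have hfv1 : fderiv ℝ v1 = v2 := funext fun x => (h2 x).fderiv
  have hv1C : ContDiff ℝ 1 v1 := by
    rw [show ((1 : WithTop ℕ∞)) = 0 + 1 by norm_num, contDiff_succ_iff_fderiv]
    refine ⟨fun x => (h2 x).differentiableAt, by simp, ?_⟩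
    rw [hfv1, contDiff_zero]
    exact pcont hD2c
  have hvC : ContDiff ℝ 2 v := by
    rw [show ((2 : WithTop ℕ∞)) = 1 + 1 by norm_num, contDiff_succ_iff_fderiv]
    refine ⟨fun x => (h1 x).differentiableAt, by simp, ?_⟩
    rw [hfv]; exact hv1C
  refine ⟨hvC, fun x => ?_⟩
  have hD2int := intOn_of_cont (Y := E M →L[ℝ] E M →L[ℝ] ℝ) (g := fun t => D2 x t)
    (hD2c.comp (Continuous.prodMk_right x))
  have key1 : ∀ i : Fin M, fderiv ℝ (fun z => fderiv ℝ v z (EuclideanSpace.single i 1)) x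
      (EuclideanSpace.single i 1)
      = (v2 x) (EuclideanSpace.single i 1) (EuclideanSpace.single i 1) := by
    intro i
    have h3 : HasFDerivAt (fun z => v1 z (EuclideanSpace.single i 1))
        ((ContinuousLinearMap.apply ℝ ℝ (EuclideanSpace.single i 1)).comp (v2 x)) x := by
      have := (ContinuousLinearMap.apply ℝ ℝ
        ((EuclideanSpace.single i 1 : E M))).hasFDerivAt.comp x (h2 x)
      exact this
    rw [hfv, h3.fderiv]
    rfl
  have key2 : ∀ (t : ℝ) (i : Fin M),
      fderiv ℝ (fun z => fderiv ℝ (fun z => F z t) z (EuclideanSpace.single i 1)) x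
        (EuclideanSpace.single i 1)
      = (D2 x t) (EuclideanSpace.single i 1) (EuclideanSpace.single i 1) := by
    intro t i
    have h3 : HasFDerivAt (fun z => D1 z t (EuclideanSpace.single i 1))
        ((ContinuousLinearMap.apply ℝ ℝ (EuclideanSpace.single i 1)).comp (D2 x t)) x := by
      have := (ContinuousLinearMap.apply ℝ ℝ
        ((EuclideanSpace.single i 1 : E M))).hasFDerivAt.comp x (hd2 x t)
      exact this
    rw [show (fun z => fderiv ℝ (fun z => F z t) z (EuclideanSpace.single i 1))
        = fun z => D1 z t (EuclideanSpace.single i 1) from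
        funext fun z => by rw [(hd1 z t).fderiv], h3.fderiv]
    rfl
  have step : ∀ i : Fin M, (v2 x) (EuclideanSpace.single i 1) (EuclideanSpace.single i 1)
      = ∫ t in Set.Ioo (-π) π,
          (D2 x t) (EuclideanSpace.single i 1) (EuclideanSpace.single i 1) := by
    intro i
    rw [show v2 x = ∫ t in Set.Ioo (-π) π, D2 x t from rfl,
      ContinuousLinearMap.integral_apply hD2int,
      ContinuousLinearMap.integral_apply (hD2int.apply_continuousLinearMap _)]
  unfold lap
  simp_rw [key1, key2, step]
  rw [← integral_finset_sum]
  intro i _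
  exact (hD2int.apply_continuousLinearMap _).apply_continuousLinearMap _

theorem odd_integral_zero {f : ℝ → ℝ} (hf : Continuous f)
    (hodd : ∀ x, f (-x) = - f x) (a : ℝ) : (∫ x in (-a)..a, f x) = 0 := by
  have h1 : (∫ x in (-a)..(0:ℝ), f x) + ∫ x in (0:ℝ)..a, f x = ∫ x in (-a)..a, f x :=
    intervalIntegral.integral_add_adjacent_intervals (hf.intervalIntegrable _ _)
      (hf.intervalIntegrable _ _)
  have h2 : (∫ x in (0:ℝ)..a, f (-x)) = ∫ x in (-a)..(0:ℝ), f x := by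
    simpa using intervalIntegral.integral_comp_neg (a := 0) (b := a) (f := f)
  have h3 : (∫ x in (0:ℝ)..a, f (-x)) = - ∫ x in (0:ℝ)..a, f x := by
    simp_rw [hodd]
    exact intervalIntegral.integral_neg
  rw [← h1, ← h2, h3]; ring

theorem deriv_even {g : ℝ → ℝ} (hg : Differentiable ℝ g)
    (heven : ∀ t, g (-t) = g t) (t : ℝ) : deriv g t = - deriv g (-t) := by
  have h1 : HasDerivAt (fun s => g (-s)) (deriv g (-t) * (-1)) t :=
    (hg (-t)).hasDerivAt.comp t (hasDerivAt_neg t)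
  have h2 : (fun s => g (-s)) = g := funext heven
  rw [h2] at h1
  rw [h1.deriv]; ring

theorem deriv_periodic {g : ℝ → ℝ} (hg : Differentiable ℝ g) {c : ℝ}
    (hper : ∀ t, g (t + c) = g t) (t : ℝ) : deriv g (t + c) = deriv g t := by
  have h1 : HasDerivAt (fun s => g (s + c)) (deriv g (t + c) * 1) t :=
    (hg (t + c)).hasDerivAt.comp t ((hasDerivAt_id t).add_const c)
  have h2 : (fun s => g (s + c)) = g := funext hper
  rw [h2] at h1
  have := h1.deriv
  linarith

/-- Cauchy-Schwarz style bound. -/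
theorem sq_integral_le {α : Type*} [MeasurableSpace α] (ν : Measure α) [IsFiniteMeasure ν]
    {f : α → ℝ} (hf1 : Integrable f ν) (hf2 : Integrable (fun a => f a ^ 2) ν) :
    (∫ a, f a ∂ν) ^ 2 ≤ (ν Set.univ).toReal * ∫ a, f a ^ 2 ∂ν := by
  set m := (ν Set.univ).toReal with hm
  have hm0 : 0 ≤ m := ENNReal.toReal_nonneg
  set I := ∫ a, f a ∂ν with hI
  have key : (0:ℝ) ≤ ∫ a, (m * f a - I) ^ 2 ∂ν := integral_nonneg fun a => sq_nonneg _
  have expand : ∫ a, (m * f a - I) ^ 2 ∂ν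
      = m ^ 2 * (∫ a, f a ^ 2 ∂ν) - (2 * m * I) * I + I ^ 2 * m := by
    have h1 : (fun a => (m * f a - I) ^ 2)
        = fun a => (m ^ 2 * f a ^ 2 - (2 * m * I) * f a) + I ^ 2 := by
      funext a; ring
    have hA : Integrable (fun a => m ^ 2 * f a ^ 2 - (2 * m * I) * f a) ν :=
      (hf2.const_mul _).sub (hf1.const_mul _)
    rw [h1, integral_add hA (integrable_const _),
      integral_sub (hf2.const_mul _) (hf1.const_mul _), integral_const_mul, integral_const_mul,
      integral_const, smul_eq_mul, measureReal_def, ← hm, ← hI]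
    ring
  rcases eq_or_lt_of_le hm0 with h0 | hpos
  · have hν : ν = 0 := by
      have := (ENNReal.toReal_eq_zero_iff _).1 h0.symm
      rcases this with h | h
      · exact Measure.measure_univ_eq_zero.mp h
      · exact absurd h (measure_ne_top ν _)
    rw [hI, hν]
    simp
  · nlinarith [key, expand, sq_nonneg I, sq_nonneg (∫ a, f a ^ 2 ∂ν)]

/-- Integration by parts for even periodic C² functions against cos(k t). -/
theorem ibp_cos {g : ℝ → ℝ} (hg : ContDiff ℝ 2 g)
    (heven : ∀ t, g (-t) = g t) (hper : ∀ t, g (t + 2 * π) = g t) (k : ℕ) :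
    ∫ t in Set.Ioo (-π) π, deriv (deriv g) t * cos (k * t)
      = -(k:ℝ) ^ 2 * ∫ t in Set.Ioo (-π) π, g t * cos (k * t) := by
  have hgd : Differentiable ℝ g := hg.differentiable (by norm_num)
  have hg' : ContDiff ℝ 1 (deriv g) := (contDiff_succ_iff_deriv.mp (show ContDiff ℝ (1+1) g by
    rw [show ((1:WithTop ℕ∞)+1 = 2) by norm_num]; exact hg)).2.2
  have hg'd : Differentiable ℝ (deriv g) := hg'.differentiable one_ne_zero
  have hg''c : Continuous (deriv (deriv g)) := hg'.continuous_deriv le_rfl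
  have hg'c : Continuous (deriv g) := hg'.continuous
  have hgc : Continuous g := hg.continuous
  have hple : -π ≤ π := by linarith [pi_pos]
  have conv : ∀ f : ℝ → ℝ, (∫ t in Set.Ioo (-π) π, f t) = ∫ t in (-π)..π, f t := by
    intro f
    rw [intervalIntegral.integral_of_le hple, integral_Ioc_eq_integral_Ioo]
  rw [conv, conv]
  have hb : deriv g π = 0 := by
    have h1 : deriv g π = - deriv g (-π) := deriv_even hgd heven π
    have h2 : deriv g ((-π) + 2 * π) = deriv g (-π) := deriv_periodic hgd hper (-π)
    have h3 : (-π) + 2 * π = π := by ring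
    rw [h3] at h2
    linarith [h1, h2]
  have hb2 : deriv g (-π) = 0 := by
    have h2 : deriv g ((-π) + 2 * π) = deriv g (-π) := deriv_periodic hgd hper (-π)
    have h3 : (-π) + 2 * π = π := by ring
    rw [h3] at h2; rw [← h2, hb]
  have hdcos : ∀ s : ℝ, HasDerivAt (fun u => cos ((k:ℝ) * u)) (-((k:ℝ) * sin ((k:ℝ) * s))) s := by
    intro s
    have h := ((hasDerivAt_id s).const_mul (k:ℝ)).cos
    exact h.congr_deriv (by simp only [id_eq, mul_one]; ring)
  have hdsin : ∀ s : ℝ, HasDerivAt (fun u => sin ((k:ℝ) * u)) ((k:ℝ) * cos ((k:ℝ) * s)) s := by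
    intro s
    have h := ((hasDerivAt_id s).const_mul (k:ℝ)).sin
    exact h.congr_deriv (by simp only [id_eq, mul_one]; ring)
  have ibp1 : (∫ t in (-π)..π, deriv g t * (-((k:ℝ) * sin ((k:ℝ) * t))))
      = deriv g π * cos ((k:ℝ) * π) - deriv g (-π) * cos ((k:ℝ) * (-π))
        - ∫ t in (-π)..π, deriv (deriv g) t * cos ((k:ℝ) * t) := by
    exact intervalIntegral.integral_mul_deriv_eq_deriv_mul
      (u := deriv g) (v := fun t => cos ((k:ℝ) * t))
      (u' := deriv (deriv g)) (v' := fun t => -((k:ℝ) * sin ((k:ℝ) * t)))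
      (fun s _ => (hg'd s).hasDerivAt) (fun s _ => hdcos s)
      (hg''c.intervalIntegrable _ _)
      (((continuous_const.mul ((Real.continuous_sin).comp
        (continuous_const.mul continuous_id))).neg).intervalIntegrable _ _)
  have ibp2 : (∫ t in (-π)..π, g t * ((k:ℝ) * cos ((k:ℝ) * t)))
      = g π * sin ((k:ℝ) * π) - g (-π) * sin ((k:ℝ) * (-π))
        - ∫ t in (-π)..π, deriv g t * sin ((k:ℝ) * t) := by
    exact intervalIntegral.integral_mul_deriv_eq_deriv_mul
      (u := g) (v := fun t => sin ((k:ℝ) * t))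
      (u' := deriv g) (v' := fun t => (k:ℝ) * cos ((k:ℝ) * t))
      (fun s _ => (hgd s).hasDerivAt) (fun s _ => hdsin s)
      (hg'c.intervalIntegrable _ _)
      ((continuous_const.mul ((Real.continuous_cos).comp
        (continuous_const.mul continuous_id))).intervalIntegrable _ _)
  have hsin0 : sin ((k:ℝ) * π) = 0 := Real.sin_nat_mul_pi k
  have hsin0' : sin ((k:ℝ) * (-π)) = 0 := by
    rw [show (k:ℝ) * (-π) = -((k:ℝ) * π) by ring, Real.sin_neg, hsin0, neg_zero]
  have e1 : (∫ t in (-π)..π, deriv g t * (-((k:ℝ) * sin ((k:ℝ) * t))))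
      = -((k:ℝ) * ∫ t in (-π)..π, deriv g t * sin ((k:ℝ) * t)) := by
    rw [← intervalIntegral.integral_const_mul, ← intervalIntegral.integral_neg]
    congr 1; funext t; ring
  have e2 : (∫ t in (-π)..π, g t * ((k:ℝ) * cos ((k:ℝ) * t)))
      = (k:ℝ) * ∫ t in (-π)..π, g t * cos ((k:ℝ) * t) := by
    rw [← intervalIntegral.integral_const_mul]
    congr 1; funext t; ring
  rw [hb, hb2, e1] at ibp1
  simp only [zero_mul, sub_zero, zero_sub, sub_self] at ibp1
  rw [e2, hsin0, hsin0'] at ibp2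
  simp only [mul_zero, zero_mul, sub_zero, zero_sub, sub_self] at ibp2
  have h4 : (∫ t in (-π)..π, deriv g t * sin ((k:ℝ) * t))
      = -((k:ℝ) * ∫ t in (-π)..π, g t * cos ((k:ℝ) * t)) := by linarith [ibp2]
  have h5 : (∫ t in (-π)..π, deriv (deriv g) t * cos ((k:ℝ) * t))
      = (k:ℝ) * ∫ t in (-π)..π, deriv g t * sin ((k:ℝ) * t) := by linarith [ibp1]
  rw [h5, h4]; ring

open AddCircle in
theorem fourier_complete (g : ℝ → ℝ) (hcont : Continuous g)
    (hper : ∀ t, g (t + 2 * π) = g t) (heven : ∀ t, g (-t) = g t)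
    (hzero : ∀ k : ℕ, (∫ t in Set.Ioo (-π) π, g t * cos ((k:ℝ) * t)) = 0) :
    ∀ t, g t = 0 := by
  haveI : Fact (0 < 2 * π) := ⟨by positivity⟩
  set gc : ℝ → ℂ := fun t => (g t : ℂ) with hgc
  have hperc : Function.Periodic gc (2 * π) := fun t => Complex.ofReal_inj.mpr (hper t)
  set G : AddCircle (2 * π) → ℂ := hperc.lift with hG
  have hGc : Continuous G := (Complex.continuous_ofReal.comp hcont).quotient_liftOn' _
  have hple : -π ≤ π := by linarith [pi_pos]
  have hcosint : ∀ n : ℤ, (∫ t in (-π)..π, cos ((n:ℝ) * t) * g t) = 0 := by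
    intro n
    have habs : ∀ t : ℝ, cos ((n:ℝ) * t) = cos ((n.natAbs : ℝ) * t) := by
      intro t
      have h1 : ((n.natAbs : ℝ)) = |(n:ℝ)| := by
        rw [Nat.cast_natAbs]; push_cast; ring
      rw [h1]
      rcases abs_choice ((n:ℝ)) with h | h
      · rw [h]
      · rw [h, show (-(n:ℝ)) * t = -((n:ℝ) * t) by ring, Real.cos_neg]
    calc (∫ t in (-π)..π, cos ((n:ℝ) * t) * g t)
        = ∫ t in (-π)..π, g t * cos ((n.natAbs:ℝ) * t) := by
          congr 1; funext t; rw [habs t]; ring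
      _ = 0 := by
          rw [intervalIntegral.integral_of_le hple, integral_Ioc_eq_integral_Ioo]
          exact hzero n.natAbs
  have hsinint : ∀ n : ℤ, (∫ t in (-π)..π, sin ((n:ℝ) * t) * g t) = 0 := by
    intro n
    apply odd_integral_zero
    · exact (Real.continuous_sin.comp (continuous_const.mul continuous_id)).mul hcont
    · intro x
      rw [show (n:ℝ) * (-x) = -((n:ℝ)*x) by ring, Real.sin_neg, heven]
      ring
  have hcoeff : ∀ n : ℤ, fourierCoeff G n = 0 := by
    intro n
    rw [fourierCoeff_eq_intervalIntegral G n (-π)]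
    have h2 : (-π) + 2 * π = π := by ring
    rw [h2]
    have hint : ∀ x : ℝ, (fourier (-n) (x : AddCircle (2*π))) • G (x : ℝ)
        = ((cos ((n:ℝ) * x) * g x : ℝ) : ℂ) - ((sin ((n:ℝ) * x) * g x : ℝ) : ℂ) * Complex.I := by
      intro x
      have h3 : G (x : ℝ) = (g x : ℂ) := by simp [hG, hgc]
      rw [h3, fourier_coe_apply, smul_eq_mul]
      have hπ : (π:ℂ) ≠ 0 := Complex.ofReal_ne_zero.mpr pi_ne_zero
      have h4 : (2 * (π:ℂ) * Complex.I * ((-n : ℤ) : ℂ) * (x : ℂ) / ((2 * π : ℝ) : ℂ))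
          = ((-((n:ℝ) * x) : ℝ) : ℂ) * Complex.I := by
        push_cast
        field_simp
      rw [h4, Complex.exp_mul_I, ← Complex.ofReal_cos, ← Complex.ofReal_sin,
        Real.cos_neg, Real.sin_neg]
      push_cast
      ring
    have key : (∫ x in (-π)..π, (fourier (-n) (x : AddCircle (2*π))) • G (x : ℝ)) = 0 := by
      have hsplit : (∫ x in (-π)..π, (fourier (-n) (x : AddCircle (2*π))) • G (x : ℝ))
          = (∫ x in (-π)..π, ((cos ((n:ℝ) * x) * g x : ℝ) : ℂ))
            - (∫ x in (-π)..π, ((sin ((n:ℝ) * x) * g x : ℝ) : ℂ)) * Complex.I := by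
        simp_rw [hint]
        rw [intervalIntegral.integral_sub, intervalIntegral.integral_mul_const]
        · exact (Complex.continuous_ofReal.comp
            (((Real.continuous_cos.comp (continuous_const.mul continuous_id))).mul
              hcont)).intervalIntegrable _ _
        · exact ((Complex.continuous_ofReal.comp
            (((Real.continuous_sin.comp (continuous_const.mul continuous_id))).mul
              hcont)).mul continuous_const).intervalIntegrable _ _
      rw [hsplit, intervalIntegral.integral_ofReal, intervalIntegral.integral_ofReal,
        hcosint n, hsinint n]
      simp
    rw [key, smul_zero]
  set Gm : C(AddCircle (2*π), ℂ) := ⟨G, hGc⟩ with hGm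
  have h5 : ContinuousMap.toLp (E := ℂ) 2 haarAddCircle ℂ Gm = 0 := by
    have h6 : fourierBasis.repr (ContinuousMap.toLp (E := ℂ) 2 haarAddCircle ℂ Gm) = 0 := by
      ext n
      rw [fourierBasis_repr, fourierCoeff_toLp]
      have hc : fourierCoeff (⇑Gm) n = 0 := hcoeff n
      simpa using hc
    exact fourierBasis.repr.map_eq_zero_iff.mp h6
  have h7 : (Gm : AddCircle (2*π) → ℂ) =ᵐ[haarAddCircle] (0 : AddCircle (2*π) → ℂ) := by
    have hh := ContinuousMap.coeFn_toLp (p := 2) (haarAddCircle) (𝕜 := ℂ) Gm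
    rw [h5] at hh
    exact hh.symm.trans (Lp.coeFn_zero ℂ 2 haarAddCircle)
  have h8 : G = (fun _ => (0:ℂ)) := by
    exact (Continuous.ae_eq_iff_eq haarAddCircle hGc continuous_const).mp h7
  intro t
  have h9 := congrFun h8 (t : AddCircle (2*π))
  have h10 : G (t : ℝ) = (g t : ℂ) := by simp [hG, hgc]
  rw [h10] at h9
  exact_mod_cast h9

theorem lap_const_mul {M : ℕ} {f : E M → ℝ} (hf : ContDiff ℝ 2 f) (c : ℝ) (x : E M) :
    lap (fun z => c * f z) x = c * lap f x := by
  unfold lap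
  rw [Finset.mul_sum]
  apply Finset.sum_congr rfl
  intro i _
  have hdf : Differentiable ℝ f := hf.differentiable (by norm_num)
  have hf1 : ContDiff ℝ 1 (fderiv ℝ f) := hf.fderiv_right (by norm_num)
  have hdf1 : Differentiable ℝ (fderiv ℝ f) := hf1.differentiable one_ne_zero
  have h1 : (fun z => fderiv ℝ (fun y => c * f y) z (EuclideanSpace.single i 1))
      = fun z => c * (fderiv ℝ f z (EuclideanSpace.single i 1)) := by
    funext z
    rw [fderiv_const_mul (hdf z) c]
    rfl
  rw [h1]
  have hdiff : DifferentiableAt ℝ (fun z => fderiv ℝ f z (EuclideanSpace.single i 1)) x := by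
    have h2 := ((ContinuousLinearMap.apply ℝ ℝ
      ((EuclideanSpace.single i 1 : E M))).hasFDerivAt (x := fderiv ℝ f x)).comp x
      (hdf1 x).hasFDerivAt
    exact h2.differentiableAt
  rw [fderiv_const_mul hdiff c]
  rfl

theorem d2_const_mul_cos (c k : ℝ) (t : ℝ) :
    d2 (fun u => c * cos (k * u)) t = -(k ^ 2) * (c * cos (k * t)) := by
  have hd1 : ∀ s : ℝ, HasDerivAt (fun u => c * cos (k * u)) (c * -(k * sin (k * s))) s := by
    intro s
    have h := (((hasDerivAt_id s).const_mul k).cos).const_mul c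
    exact h.congr_deriv (by simp only [id_eq, mul_one]; ring)
  have hd2 : ∀ s : ℝ, HasDerivAt (fun u => c * -(k * sin (k * u)))
      (-(c * k * (k * cos (k * s)))) s := by
    intro s
    have h := ((((hasDerivAt_id s).const_mul k).sin).const_mul (c * k)).neg
    convert h using 1
    · rfl
    · rfl
    · funext u; simp only [id_eq, Pi.neg_apply]; ring
    · simp only [id_eq, mul_one]; ring
  unfold d2
  have e1 : deriv (fun u => c * cos (k * u)) = fun s => c * -(k * sin (k * s)) :=
    funext fun s => (hd1 s).deriv
  rw [e1, (hd2 t).deriv]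
  ring

theorem symmetric_periodic_eigenvalues_by_separation
    (M : ℕ) (hM : 1 ≤ M) (b : E M → ℝ) (hbC : Continuous b) (hbB : ∃ C, ∀ x, |b x| ≤ C)
    (μ₀ : ℝ) (hμ₀ : μ₀ < 0) (ψ₀ : E M → ℝ) (hψ₀ : RadEigenfun b μ₀ ψ₀)
    (huniq : ∀ μ ≤ (0 : ℝ), μ ≠ μ₀ → ¬ IsRadEigenvalue b μ) :
    ∀ μ ≤ (0 : ℝ),
      ((∃ w, SymPerEigenfun b μ w) ↔ ∃ k : ℕ, μ = μ₀ + (k : ℝ) ^ 2) ∧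
      (∀ k : ℕ, μ = μ₀ + (k : ℝ) ^ 2 →
        SymPerEigenfun b μ (fun x t => ψ₀ x * Real.cos (k * t))) := by
  intro μ hμ
  obtain ⟨hψne, hψC, hψrad, hψint, hψeq⟩ := hψ₀
  have construct : ∀ k : ℕ, μ = μ₀ + (k:ℝ)^2 →
      SymPerEigenfun b μ (fun x t => ψ₀ x * Real.cos (k * t)) := by
    intro k hk
    refine ⟨?_, ?_, ?_, ?_, ?_, ?_, ?_⟩
    · -- nonzero
      obtain ⟨x, hx⟩ := Function.ne_iff.mp hψne
      apply Function.ne_iff.mpr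
      refine ⟨x, Function.ne_iff.mpr ⟨0, ?_⟩⟩
      simpa using hx
    · exact (hψC.comp contDiff_fst).mul
        (Real.contDiff_cos.comp (contDiff_const.mul contDiff_snd))
    · intro x x' t h; dsimp only; rw [hψrad x x' h]
    · intro x t; dsimp only; rw [show (k:ℝ) * -t = -((k:ℝ)*t) by ring, Real.cos_neg]
    · intro x t
      dsimp only
      rw [show (k:ℝ) * (t + 2*π) = (k:ℝ)*t + (k:ℕ) * (2*π) by push_cast; ring,
        Real.cos_add_nat_mul_two_pi]
    · -- integrability
      have hprod : (volume : Measure (E M × ℝ)).restrict (Set.univ ×ˢ Set.Ioo (-π) π)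
          = (volume : Measure (E M)).prod (volume.restrict (Set.Ioo (-π) π)) := by
        rw [Measure.volume_eq_prod, ← Measure.prod_restrict, Measure.restrict_univ]
      unfold IntegrableOn
      rw [hprod]
      have heq : (fun p : E M × ℝ => (ψ₀ p.1 * Real.cos ((k:ℝ) * p.2)) ^ 2)
          = fun p : E M × ℝ => (ψ₀ p.1 ^ 2) * (Real.cos ((k:ℝ) * p.2) ^ 2) := by
        funext p; ring
      rw [heq]
      exact hψint.mul_prod (intOn_of_cont
        (((Real.continuous_cos.comp (continuous_const.mul continuous_id))).pow 2))
    · intro x t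
      have hlap : lap (fun z => ψ₀ z * Real.cos ((k:ℝ) * t)) x
          = Real.cos ((k:ℝ)*t) * lap ψ₀ x := by
        rw [show (fun z => ψ₀ z * Real.cos ((k:ℝ)*t))
            = fun z => Real.cos ((k:ℝ)*t) * ψ₀ z from funext fun z => mul_comm _ _]
        exact lap_const_mul hψC _ x
      have hd2x : d2 (fun u => ψ₀ x * Real.cos ((k:ℝ)*u)) t
          = -((k:ℝ)^2) * (ψ₀ x * Real.cos ((k:ℝ)*t)) := d2_const_mul_cos _ _ t
      simp only
      rw [hlap, hd2x, hk]
      linear_combination (Real.cos ((k:ℝ)*t)) * hψeq x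
  refine ⟨⟨?_, fun ⟨k, hk⟩ => ⟨_, construct k hk⟩⟩, construct⟩
  rintro ⟨w, hwne, hwC, hwrad, hweven, hwper, hwint, hweq⟩
  have hwx : ∀ x, ContDiff ℝ 2 (w x) := fun x =>
    hwC.comp ((contDiff_const (c := x)).prodMk contDiff_id)
  have hwt : ∀ t, ContDiff ℝ 2 (fun z => w z t) := fun t =>
    hwC.comp (contDiff_id.prodMk contDiff_const)
  set V : ℕ → E M → ℝ :=
    fun k x => ∫ t in Set.Ioo (-π) π, w x t * Real.cos ((k:ℝ) * t) with hV
  have hFkC : ∀ k : ℕ, ContDiff ℝ 2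
      (fun p : E M × ℝ => w p.1 p.2 * Real.cos ((k:ℝ) * p.2)) := fun k =>
    hwC.mul (Real.contDiff_cos.comp (contDiff_const.mul contDiff_snd))
  have hPL : ∀ k : ℕ, ContDiff ℝ 2 (V k) ∧ ∀ x, lap (V k) x
      = ∫ t in Set.Ioo (-π) π, lap (fun z => w z t * Real.cos ((k:ℝ) * t)) x :=
    fun k => param_lap _ (hFkC k)
  -- find k with V k ≠ 0
  have hex : ∃ k : ℕ, V k ≠ 0 := by
    by_contra h
    push_neg at h
    obtain ⟨x₀, hx₀⟩ := Function.ne_iff.mp hwne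
    obtain ⟨t₀, ht₀⟩ := Function.ne_iff.mp hx₀
    refine ht₀ ?_
    have := fourier_complete (w x₀) (hwx x₀).continuous (hwper x₀) (hweven x₀)
      (fun k => by have := congrFun (h k) x₀; simpa [hV] using this)
    simpa using this t₀
  obtain ⟨k, hVk⟩ := hex
  -- V k is a radial eigenfunction with eigenvalue μ - k²
  set ν := volume.restrict (Set.Ioo (-π) π) with hν
  haveI : IsFiniteMeasure ν := ⟨by rw [Measure.restrict_apply_univ]; exact measure_S_lt_top⟩
  have hrad : RadEigenfun b (μ - (k:ℝ)^2) (V k) := by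
    refine ⟨hVk, (hPL k).1, ?_, ?_, ?_⟩
    · intro x y hxy
      simp only [hV]
      congr 1
      funext t
      rw [hwrad x y t hxy]
    · -- integrability of (V k)²
      have hprod : (volume : Measure (E M × ℝ)).restrict (Set.univ ×ˢ Set.Ioo (-π) π)
          = (volume : Measure (E M)).prod ν := by
        rw [Measure.volume_eq_prod, ← Measure.prod_restrict, Measure.restrict_univ]
      have hint2 : Integrable (fun p : E M × ℝ => (w p.1 p.2) ^ 2) (volume.prod ν) := by
        rw [← hprod]; exact hwint
      have hg : Integrable (fun x => ∫ t, (w x t)^2 ∂ν) volume := hint2.integral_prod_left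
      have hm0 : (0:ℝ) ≤ (ν Set.univ).toReal := ENNReal.toReal_nonneg
      apply Integrable.mono' (hg.const_mul ((ν Set.univ).toReal))
      · exact (((hPL k).1.continuous).pow 2).aestronglyMeasurable
      · refine Filter.Eventually.of_forall fun x => ?_
        have hcw : Continuous (w x) := (hwx x).continuous
        have hck : Continuous (fun t => w x t * Real.cos ((k:ℝ)*t)) :=
          hcw.mul (Real.continuous_cos.comp (continuous_const.mul continuous_id))
        have h1 : Integrable (fun t => w x t * Real.cos ((k:ℝ)*t)) ν := intOn_of_cont hck
        have h2 : Integrable (fun t => (w x t * Real.cos ((k:ℝ)*t))^2) ν :=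
          intOn_of_cont (hck.pow 2)
        have h3 : Integrable (fun t => (w x t)^2) ν := intOn_of_cont (hcw.pow 2)
        have hcs := sq_integral_le ν h1 h2
        have hmono : (∫ t, (w x t * Real.cos ((k:ℝ)*t))^2 ∂ν) ≤ ∫ t, (w x t)^2 ∂ν := by
          apply integral_mono h2 h3
          intro t
          dsimp only
          have hc1 : Real.cos ((k:ℝ)*t)^2 ≤ 1 := Real.cos_sq_le_one _
          nlinarith [mul_nonneg (sq_nonneg (w x t)) (sub_nonneg.mpr hc1)]
        have : ‖(V k x)^2‖ = (V k x)^2 := by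
          rw [Real.norm_eq_abs, abs_of_nonneg (sq_nonneg _)]
        rw [this]
        calc (V k x)^2 ≤ (ν Set.univ).toReal * ∫ t, (w x t * Real.cos ((k:ℝ)*t))^2 ∂ν := hcs
          _ ≤ (ν Set.univ).toReal * ∫ t, (w x t)^2 ∂ν := by
              exact mul_le_mul_of_nonneg_left hmono hm0
    · -- eigen equation
      intro x
      have hlapint : lap (V k) x
          = ∫ t in Set.Ioo (-π) π, lap (fun z => w z t * Real.cos ((k:ℝ) * t)) x := (hPL k).2 x
      have hpoint : (fun t => lap (fun z => w z t * Real.cos ((k:ℝ) * t)) x)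
          = fun t => (-(μ + b x)) * (w x t * Real.cos ((k:ℝ)*t))
            - d2 (w x) t * Real.cos ((k:ℝ)*t) := by
        funext t
        have hl1 : lap (fun z => w z t * Real.cos ((k:ℝ) * t)) x
            = Real.cos ((k:ℝ)*t) * lap (fun z => w z t) x := by
          rw [show (fun z => w z t * Real.cos ((k:ℝ)*t))
              = fun z => Real.cos ((k:ℝ)*t) * w z t from funext fun z => mul_comm _ _]
          exact lap_const_mul (hwt t) _ x
        have he := hweq x t
        rw [hl1]
        linear_combination (-(Real.cos ((k:ℝ)*t))) * he
      rw [hlapint, hpoint]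
      have hcw : Continuous (w x) := (hwx x).continuous
      have hck : Continuous (fun t => w x t * Real.cos ((k:ℝ)*t)) :=
        hcw.mul (Real.continuous_cos.comp (continuous_const.mul continuous_id))
      have hd2c : Continuous (fun t => d2 (w x) t) := by
        have hg' : ContDiff ℝ 1 (deriv (w x)) :=
          (contDiff_succ_iff_deriv.mp (show ContDiff ℝ (1+1) (w x) by
            rw [show ((1:WithTop ℕ∞)+1 = 2) by norm_num]; exact hwx x)).2.2
        exact hg'.continuous_deriv le_rfl
      have h1 : Integrable (fun t => (-(μ + b x)) * (w x t * Real.cos ((k:ℝ)*t))) ν :=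
        (intOn_of_cont hck).const_mul _
      have h2 : Integrable (fun t => d2 (w x) t * Real.cos ((k:ℝ)*t)) ν :=
        intOn_of_cont (hd2c.mul (Real.continuous_cos.comp
          (continuous_const.mul continuous_id)))
      rw [integral_sub h1 h2, integral_const_mul]
      have hibp : (∫ t in Set.Ioo (-π) π, d2 (w x) t * Real.cos ((k:ℝ)*t))
          = -(k:ℝ)^2 * ∫ t in Set.Ioo (-π) π, w x t * Real.cos ((k:ℝ)*t) := by
        have := ibp_cos (hwx x) (hweven x) (hwper x) k
        exact this
      rw [hibp]
      simp only [hV]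
      ring
  have hle : μ - (k:ℝ)^2 ≤ 0 := by nlinarith [sq_nonneg ((k:ℝ))]
  have heq0 : μ - (k:ℝ)^2 = μ₀ := by
    by_contra hne
    exact huniq _ hle hne ⟨V k, hrad⟩
  exact ⟨k, by linarith⟩
end
end
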